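/- Let ε = (ε_{ij}) ∈ ℂ^{m×m} be Hermitian positive definite and tridiagonal (ε_{ij} = 0 for |i−j| > 1). Let S_{ij} ∈ ℂ^{N×N} for 1 ≤ i ≤ j ≤ m satisfy S_{ii} = I_N, S_{ji} = S_{ij}†, and ‖S_{ij}‖₂ ≤ 1. Then the mN×mN block matrix M with (i,j)-block ε_{ij} S_{ij} is Hermitian positive definite. -/

import Mathlib

open Matrix
open scoped ComplexOrder

/-- The spectral norm (operator norm induced by the Euclidean norm) of a square matrix. -/
noncomputable def specNorm {α : Type*} [Fintype α] [DecidableEq α]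
    (M : Matrix α α ℂ) : ℝ :=
  ‖Matrix.toEuclideanCLM (𝕜 := ℂ) M‖


noncomputable def phaseAux {m : ℕ} (ε : Matrix (Fin m) (Fin m) ℂ) : ℕ → ℂ
  | 0 => 1
  | (n+1) =>
    if h : n + 1 < m then
      (if he : ε ⟨n, Nat.lt_of_succ_lt h⟩ ⟨n+1, h⟩ = 0 then phaseAux ε n
       else -phaseAux ε n * (starRingEnd ℂ) (ε ⟨n, Nat.lt_of_succ_lt h⟩ ⟨n+1, h⟩)
            / (‖ε ⟨n, Nat.lt_of_succ_lt h⟩ ⟨n+1, h⟩‖ : ℂ))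
    else 1

lemma phaseAux_norm {m : ℕ} (ε : Matrix (Fin m) (Fin m) ℂ) (n : ℕ) :
    ‖phaseAux ε n‖ = 1 := by
  induction n with
  | zero => simp [phaseAux]
  | succ n ih =>
    rw [phaseAux]
    split_ifs with h he
    · exact ih
    · rw [norm_div, norm_mul, norm_neg, Complex.norm_conj, ih,
        one_mul, Complex.norm_real, norm_norm,
        div_self (by simpa using he)]
    · simp

lemma phaseAux_adj {m : ℕ} (ε : Matrix (Fin m) (Fin m) ℂ) (i j : Fin m)
    (hj : j.val = i.val + 1) :
    (starRingEnd ℂ) (phaseAux ε i.val) * ε i j * phaseAux ε j.val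
      = -(‖ε i j‖ : ℂ) := by
  by_cases he : ε i j = 0
  · simp [he]
  · have h : i.val + 1 < m := hj ▸ j.isLt
    have hji : (⟨i.val + 1, h⟩ : Fin m) = j := by exact Fin.ext hj.symm
    have hii : (⟨i.val, Nat.lt_of_succ_lt h⟩ : Fin m) = i := Fin.eta _ _
    have hphase : phaseAux ε j.val
        = -phaseAux ε i.val * (starRingEnd ℂ) (ε i j) / (‖ε i j‖ : ℂ) := by
      rw [hj, phaseAux, dif_pos h]
      rw [dif_neg (by rw [hii, hji]; exact he), hii, hji]
    set q := phaseAux ε i.val with hq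
    have hqq : (starRingEnd ℂ) q * q = 1 := by
      rw [Complex.conj_mul', phaseAux_norm]
      norm_num
    have habs : (‖ε i j‖ : ℂ) ≠ 0 := by
      simpa using he
    rw [hphase]
    have : (starRingEnd ℂ) q * ε i j * (-q * (starRingEnd ℂ) (ε i j) / (‖ε i j‖ : ℂ))
        = -(((starRingEnd ℂ) q * q) * (ε i j * (starRingEnd ℂ) (ε i j)) / (‖ε i j‖ : ℂ)) := by
      ring
    rw [this, hqq, one_mul, Complex.mul_conj, Complex.normSq_eq_norm_sq]
    push_cast
    rw [sq, mul_div_assoc, div_self habs, mul_one]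

lemma phaseAux_key {m : ℕ} (ε : Matrix (Fin m) (Fin m) ℂ) (hH : ε.IsHermitian)
    (htri : ∀ i j : Fin m, (i.val + 1 < j.val ∨ j.val + 1 < i.val) → ε i j = 0)
    (i j : Fin m) (hij : i ≠ j) :
    (starRingEnd ℂ) (phaseAux ε i.val) * ε i j * phaseAux ε j.val
      = -(‖ε i j‖ : ℂ) := by
  by_cases h1 : j.val = i.val + 1
  · exact phaseAux_adj ε i j h1
  by_cases h2 : i.val = j.val + 1
  · have hsym : ε i j = (starRingEnd ℂ) (ε j i) := (hH.apply i j).symm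
    have h1 := phaseAux_adj ε j i h2
    calc (starRingEnd ℂ) (phaseAux ε i.val) * ε i j * phaseAux ε j.val
        = (starRingEnd ℂ) ((starRingEnd ℂ) (phaseAux ε j.val) * ε j i * phaseAux ε i.val) := by
          rw [hsym, _root_.map_mul, _root_.map_mul, Complex.conj_conj]; ring
      _ = (starRingEnd ℂ) (-(‖ε j i‖ : ℂ)) := by rw [h1]
      _ = -(‖ε i j‖ : ℂ) := by
          rw [hsym, Complex.norm_conj, map_neg, Complex.conj_ofReal]
  · have : ε i j = 0 := htri i j (by omega)
    simp [this]

lemma phaseAux_conj_mul {m : ℕ} (ε : Matrix (Fin m) (Fin m) ℂ) (n : ℕ) :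
    (starRingEnd ℂ) (phaseAux ε n) * phaseAux ε n = 1 := by
  rw [Complex.conj_mul', phaseAux_norm]
  norm_num

lemma dot_bound {N : ℕ} (A : Matrix (Fin N) (Fin N) ℂ) (hA : specNorm A ≤ 1)
    (u v : Fin N → ℂ) :
    ‖star u ⬝ᵥ (A *ᵥ v)‖
      ≤ ‖((WithLp.equiv 2 _).symm u : EuclideanSpace ℂ (Fin N))‖
        * ‖((WithLp.equiv 2 _).symm v : EuclideanSpace ℂ (Fin N))‖ := by
  have h1 : star u ⬝ᵥ (A *ᵥ v)
      = @inner ℂ _ _ ((WithLp.equiv 2 _).symm u : EuclideanSpace ℂ (Fin N))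
        (Matrix.toEuclideanCLM (𝕜 := ℂ) A ((WithLp.equiv 2 _).symm v)) := by
    rw [WithLp.equiv_symm_apply, Matrix.toEuclideanCLM_toLp, EuclideanSpace.inner_toLp_toLp,
      dotProduct_comm]
  rw [h1]
  calc ‖_‖ ≤ ‖((WithLp.equiv 2 _).symm u : EuclideanSpace ℂ (Fin N))‖
        * ‖Matrix.toEuclideanCLM (𝕜 := ℂ) A ((WithLp.equiv 2 _).symm v)‖ :=
      norm_inner_le_norm _ _
    _ ≤ ‖((WithLp.equiv 2 _).symm u : EuclideanSpace ℂ (Fin N))‖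
        * (1 * ‖((WithLp.equiv 2 _).symm v : EuclideanSpace ℂ (Fin N))‖) := by
      refine mul_le_mul_of_nonneg_left ?_ (norm_nonneg _)
      calc ‖Matrix.toEuclideanCLM (𝕜 := ℂ) A ((WithLp.equiv 2 _).symm v)‖
          ≤ ‖Matrix.toEuclideanCLM (𝕜 := ℂ) A‖
            * ‖((WithLp.equiv 2 _).symm v : EuclideanSpace ℂ (Fin N))‖ :=
        ContinuousLinearMap.le_opNorm _ _
        _ ≤ 1 * ‖((WithLp.equiv 2 _).symm v : EuclideanSpace ℂ (Fin N))‖ :=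
        mul_le_mul_of_nonneg_right hA (norm_nonneg _)
    _ = _ := by ring

lemma self_dot {N : ℕ} (v : Fin N → ℂ) :
    star v ⬝ᵥ v = ((‖((WithLp.equiv 2 _).symm v : EuclideanSpace ℂ (Fin N))‖ : ℂ))^2 := by
  rw [WithLp.equiv_symm_apply, dotProduct_comm, ← EuclideanSpace.inner_toLp_toLp,
    inner_self_eq_norm_sq_to_K]; rfl

/-- If ε is HPD and tridiagonal, S_ii = I, S_ji = S_ij†, ‖S_ij‖₂ ≤ 1, then the block matrix
M with (i,j)-block ε_ij S_ij is Hermitian positive definite. -/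
theorem block_tridiagonal_HPD (m N : ℕ)
    (ε : Matrix (Fin m) (Fin m) ℂ) (hPD : ε.PosDef)
    (htri : ∀ i j : Fin m, (i.val + 1 < j.val ∨ j.val + 1 < i.val) → ε i j = 0)
    (S : Fin m → Fin m → Matrix (Fin N) (Fin N) ℂ)
    (hSii : ∀ i, S i i = 1)
    (hSsym : ∀ i j, S j i = (S i j)ᴴ)
    (hSnorm : ∀ i j, specNorm (S i j) ≤ 1)
    (M : Matrix (Fin m × Fin N) (Fin m × Fin N) ℂ)
    (hM : ∀ p q, M p q = ε p.1 q.1 * S p.1 q.1 p.2 q.2) :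
    M.PosDef := by
  have hHerm : M.IsHermitian := by
    ext p q
    rw [conjTranspose_apply, hM, hM, star_mul', hSsym p.1 q.1, conjTranspose_apply, star_star,
      hPD.1.apply p.1 q.1]
  refine posDef_iff_dotProduct_mulVec.mpr ⟨hHerm, fun x hx => ?_⟩
  -- notation
  set xv : Fin m → Fin N → ℂ := fun i k => x (i, k) with hxv
  set a : Fin m → ℝ := fun i => ‖((WithLp.equiv 2 _).symm (xv i) : EuclideanSpace ℂ (Fin N))‖
    with ha
  set u : Fin m → ℂ := fun i => phaseAux ε i.val with hu
  set y : Fin m → ℂ := fun i => u i * (a i : ℂ) with hy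
  set c : Fin m → Fin m → ℂ := fun i j => star (xv i) ⬝ᵥ (S i j *ᵥ xv j) with hc
  -- expansion of the quadratic form
  have hexp : star x ⬝ᵥ M *ᵥ x = ∑ i, ∑ j, ε i j * c i j := by
    simp only [hc, dotProduct, mulVec, Pi.star_apply, Fintype.sum_prod_type, hM,
      Finset.mul_sum]
    refine Finset.sum_congr rfl fun i _ => ?_
    rw [Finset.sum_comm]
    exact Finset.sum_congr rfl fun j _ => Finset.sum_congr rfl fun k _ =>
      Finset.sum_congr rfl fun l _ => by ring
  have hexp2 : star y ⬝ᵥ ε *ᵥ y = ∑ i, ∑ j, (starRingEnd ℂ) (y i) * ε i j * y j := by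
    simp only [dotProduct, mulVec, Pi.star_apply, Finset.mul_sum, Complex.star_def]
    exact Finset.sum_congr rfl fun i _ => Finset.sum_congr rfl fun j _ => by ring
  -- termwise comparison
  have hterm : ∀ i j, ((starRingEnd ℂ) (y i) * ε i j * y j).re ≤ (ε i j * c i j).re := by
    intro i j
    by_cases hij : i = j
    · subst hij
      have hcii : c i i = ((a i : ℂ))^2 := by
        rw [hc]; simp only [hSii, one_mulVec]; exact self_dot (xv i)
      have : (starRingEnd ℂ) (y i) * ε i i * y i = ε i i * c i i := by
        rw [hcii, hy]
        simp only [_root_.map_mul, Complex.conj_ofReal]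
        calc (starRingEnd ℂ) (u i) * (a i : ℂ) * ε i i * (u i * (a i : ℂ))
            = ((starRingEnd ℂ) (u i) * u i) * (ε i i * ((a i : ℂ))^2) := by ring
          _ = ε i i * ((a i : ℂ))^2 := by rw [hu, phaseAux_conj_mul]; ring
      rw [this]
    · have hkey : (starRingEnd ℂ) (u i) * ε i j * u j = -(‖ε i j‖ : ℂ) :=
        phaseAux_key ε hPD.1 htri i j hij
      have hL : (starRingEnd ℂ) (y i) * ε i j * y j
          = -((‖ε i j‖ * (a i * a j) : ℝ) : ℂ) := by
        rw [hy]
        simp only [_root_.map_mul, Complex.conj_ofReal]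
        calc (starRingEnd ℂ) (u i) * (a i : ℂ) * ε i j * (u j * (a j : ℂ))
            = ((starRingEnd ℂ) (u i) * ε i j * u j) * ((a i : ℂ) * (a j : ℂ)) := by ring
          _ = -(‖ε i j‖ : ℂ) * ((a i : ℂ) * (a j : ℂ)) := by rw [hkey]
          _ = _ := by push_cast; ring
      rw [hL]
      have hb : ‖ε i j * c i j‖ ≤ ‖ε i j‖ * (a i * a j) := by
        rw [norm_mul]
        refine mul_le_mul_of_nonneg_left ?_ (norm_nonneg _)
        exact dot_bound (S i j) (hSnorm i j) (xv i) (xv j)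
      have := (neg_le_neg hb).trans ((neg_le_neg (Complex.abs_re_le_norm _)).trans
        (neg_abs_le _))
      simpa using this
  -- y ≠ 0
  have hy0 : y ≠ 0 := by
    obtain ⟨p, hp⟩ := Function.ne_iff.mp hx
    have hxvi : xv p.1 ≠ 0 := by
      intro h
      exact hp (by simpa using congrFun h p.2)
    have hai : a p.1 ≠ 0 := by
      rw [ha]
      simp only [norm_ne_zero_iff]
      intro h
      apply hxvi
      have := congrArg (WithLp.equiv 2 (Fin N → ℂ)) h
      simpa using this
    have hui : u p.1 ≠ 0 := by
      intro h
      have h2 := phaseAux_norm ε (p.1 : ℕ)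
      rw [show phaseAux ε (p.1 : ℕ) = u p.1 from rfl, h] at h2
      simp at h2
    intro h
    have := congrFun h p.1
    simp only [hy, Pi.zero_apply, mul_eq_zero] at this
    rcases this with h' | h'
    · exact hui h'
    · exact hai (by exact_mod_cast h')
  have hpos := hPD.dotProduct_mulVec_pos hy0
  rw [Complex.lt_def] at hpos
  simp only [Complex.zero_re, Complex.zero_im] at hpos
  -- real part comparison
  have hre : (star y ⬝ᵥ ε *ᵥ y).re ≤ (star x ⬝ᵥ M *ᵥ x).re := by
    rw [hexp, hexp2, Complex.re_sum, Complex.re_sum]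
    refine Finset.sum_le_sum fun i _ => ?_
    rw [Complex.re_sum, Complex.re_sum]
    exact Finset.sum_le_sum fun j _ => hterm i j
  -- imaginary part zero
  have him : (star x ⬝ᵥ M *ᵥ x).im = 0 := by
    have hstar : star (star x ⬝ᵥ M *ᵥ x) = star x ⬝ᵥ M *ᵥ x := by
      conv_lhs => rw [star_dotProduct, star_star, star_mulVec, hHerm.eq]
      rw [← dotProduct_mulVec]
    rw [← Complex.conj_eq_iff_im]
    exact hstar
  rw [Complex.lt_def]
  constructor
  · simpa using lt_of_lt_of_le hpos.1 hre
  · simp [him]
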